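/- arXiv:2103.08046 — 4 statements merged into one kernel-verified Lean document; each statement's English description precedes it below -/
import Mathlib

section
/- Let G be a structure over {R,U} with domain A satisfying: (1) ∀x (∃y R(x,y) ∧ ∃y U(x,y)), and (2) the grid-confluence property ∀x∀y∀z∀w ((R(x,y) ∧ U(x,z) ∧ R(z,w)) → U(y,w)). Then there is a homomorphism h : ℕ × ℕ → A from the standard grid to G, i.e. h satisfies R(h(i,j), h(i+1,j)) and U(h(i,j), h(i,j+1)) for all i, j ∈ ℕ. -/
theorem stmt_1 {A : Type*} [Nonempty A] (R U : A → A → Prop)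
    (hsucc : ∀ x, (∃ y, R x y) ∧ (∃ y, U x y))
    (hconf : ∀ x y z w, R x y ∧ U x z ∧ R z w → U y w) :
    ∃ h : ℕ × ℕ → A, ∀ i j : ℕ, R (h (i, j)) (h (i + 1, j)) ∧ U (h (i, j)) (h (i, j + 1)) := by
  choose r hr using fun x => (hsucc x).1
  choose u hu using fun x => (hsucc x).2
  obtain ⟨x0⟩ := ‹Nonempty A›
  refine ⟨fun p => r^[p.1] (u^[p.2] x0), fun i j => ⟨?_, ?_⟩⟩
  · simp only [Function.iterate_succ', Function.comp_apply]
    exact hr _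
  · induction i with
    | zero =>
      simp only [Function.iterate_zero, Function.iterate_succ', Function.comp_apply, id]
      exact hu _
    | succ n ih =>
      simp only [Function.iterate_succ', Function.comp_apply] at ih ⊢
      exact hconf _ _ _ _ ⟨hr _, ih, hr _⟩
end

section
/- Under the hypotheses (1)–(4) of the infinity axiom (∃x Z(x); ∀x ∃y (S(x,y) ∧ ¬Z(y)); ∀x∀z (S(z,x) → ∀y (y = z ∨ F(x,y,z))); ∀x∀y (∃z F(x,y,z) → ¬S(y,x))), any function f : A → A satisfying S(a, f(a)) and ¬Z(f(a)) for all a ∈ A is injective. -/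
theorem stmt_3 {A : Type*} (Z : A → Prop) (S : A → A → Prop) (F : A → A → A → Prop)
    (h1 : ∃ x, Z x)
    (h2 : ∀ x, ∃ y, S x y ∧ ¬ Z y)
    (h3 : ∀ x z, S z x → ∀ y, y = z ∨ F x y z)
    (h4 : ∀ x y, (∃ z, F x y z) → ¬ S y x)
    (f : A → A)
    (hf : ∀ a, S a (f a) ∧ ¬ Z (f a)) :
    Function.Injective f := by
  intro a b hab
  rcases h3 (f a) a (hf a).1 b with h | h
  · exact h.symm
  · exact absurd (hab ▸ (hf b).1) (h4 (f a) b ⟨a, h⟩)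
end

section
/- Suppose A is a structure over the tiling signature {P_t : t ∈ 𝕋} ∪ {T_t^H : t ∈ 𝕋} ∪ {T_t^V : t ∈ 𝕋} (P_t binary, T_t^H, T_t^V ternary) satisfying: φ₁: ∀x∀y ⋁_t P_t(x,y); φ₂: ∀x∀y ⋀_{t≠t'} ¬(P_t(x,y) ∧ P_{t'}(x,y)); φ₃: there is a function Succ : A → A such that for all a, b ∈ A, ⋁_{t_R = t'_L}(T_t^H(a, Succ(a), b) ∧ P_{t'}(Succ(a), b)) and ⋁_{t_T = t'_B}(T_t^V(a, Succ(a), b) ∧ P_{t'}(b, Succ(a))); φ₄: ∀x∀z ⋀_t ((∃y T_t^H(x,y,z)) → P_t(x,z)); φ₅: ∀x∀z ⋀_t ((∃y T_t^V(x,y,z)) → P_t(z,x)). Then for any a ∈ A, the function σ : ℕ × ℕ → 𝕋 defined by σ(n,m) = t iff (Succⁿ(a), Succᵐ(a)) ∈ P_t is a well-defined valid 𝕋-tiling of ℕ × ℕ. -/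
theorem stmt_12 {A 𝕋 C : Type*} [Finite 𝕋]
    (tR tL tT tB : 𝕋 → C)
    (P : 𝕋 → A → A → Prop) (TH TV : 𝕋 → A → A → A → Prop) (Succ : A → A)
    (φ1 : ∀ x y, ∃ t, P t x y)
    (φ2 : ∀ x y, ∀ t t', t ≠ t' → ¬ (P t x y ∧ P t' x y))
    (φ3 : ∀ a b, (∃ t t', tR t = tL t' ∧ TH t a (Succ a) b ∧ P t' (Succ a) b) ∧
                 (∃ t t', tT t = tB t' ∧ TV t a (Succ a) b ∧ P t' b (Succ a)))
    (φ4 : ∀ x z, ∀ t, (∃ y, TH t x y z) → P t x z)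
    (φ5 : ∀ x z, ∀ t, (∃ y, TV t x y z) → P t z x) :
    ∀ a : A, ∃ σ : ℕ × ℕ → 𝕋,
      (∀ n m : ℕ, ∀ t : 𝕋, σ (n, m) = t ↔ P t (Succ^[n] a) (Succ^[m] a)) ∧
      (∀ n m : ℕ, tR (σ (n, m)) = tL (σ (n + 1, m)) ∧ tT (σ (n, m)) = tB (σ (n, m + 1))) := by
  intro a
  classical
  refine ⟨fun p => (φ1 (Succ^[p.1] a) (Succ^[p.2] a)).choose, ?_, ?_⟩
  · intro n m t
    have hc := (φ1 (Succ^[n] a) (Succ^[m] a)).choose_spec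
    constructor
    · rintro rfl; exact hc
    · intro ht
      by_contra hne
      exact φ2 _ _ _ _ hne ⟨hc, ht⟩
  · have key : ∀ n m t, P t (Succ^[n] a) (Succ^[m] a) →
        (φ1 (Succ^[n] a) (Succ^[m] a)).choose = t := by
      intro n m t ht
      by_contra hne
      exact φ2 _ _ _ _ hne ⟨(φ1 (Succ^[n] a) (Succ^[m] a)).choose_spec, ht⟩
    intro n m
    obtain ⟨⟨t, t', hRL, hTH, hP'⟩, -⟩ := φ3 (Succ^[n] a) (Succ^[m] a)
    obtain ⟨-, ⟨s, s', hTB, hTV, hQ'⟩⟩ := φ3 (Succ^[m] a) (Succ^[n] a)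
    have h1 : (φ1 (Succ^[n] a) (Succ^[m] a)).choose = t :=
      key n m t (φ4 _ _ t ⟨_, hTH⟩)
    have h2 : (φ1 (Succ^[n+1] a) (Succ^[m] a)).choose = t' := by
      apply key; rwa [Function.iterate_succ_apply']
    have h3 : (φ1 (Succ^[n] a) (Succ^[m] a)).choose = s :=
      key n m s (φ5 _ _ s ⟨_, hTV⟩)
    have h4 : (φ1 (Succ^[n] a) (Succ^[m+1] a)).choose = s' := by
      apply key; rwa [Function.iterate_succ_apply']
    simp only [h1, h2, h3, h4] at *
    exact ⟨hRL, h3 ▸ hTB⟩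
end

section
/- If a finite set of tiles 𝕋 tiles ℕ × ℕ (i.e., a valid 𝕋-tiling σ : ℕ × ℕ → 𝕋 exists), then the structure with domain ℕ, where P_t = {(n,m) : σ(n,m) = t}, T_t^H = {(n,m,k) : σ(n,k) = t and m = n+1}, and T_t^V = {(n,m,k) : σ(k,n) = t and m = n+1}, satisfies the sentences φ₁–φ₅ of the tiling encoding Γ_𝕋. -/
theorem stmt_13 {𝕋 C : Type*} [Finite 𝕋]
    (tR tL tT tB : 𝕋 → C) (σ : ℕ × ℕ → 𝕋)
    (hH : ∀ i j : ℕ, tR (σ (i, j)) = tL (σ (i + 1, j)))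
    (hV : ∀ i j : ℕ, tT (σ (i, j)) = tB (σ (i, j + 1))) :
    -- with P t n m := σ (n, m) = t,  T^H t n m k := σ (n, k) = t ∧ m = n + 1,
    -- and  T^V t n m k := σ (k, n) = t ∧ m = n + 1 :
    (∀ x y : ℕ, ∃ t, σ (x, y) = t) ∧
    (∀ x y : ℕ, ∀ t t', t ≠ t' → ¬ (σ (x, y) = t ∧ σ (x, y) = t')) ∧
    (∀ x : ℕ, ∃ y : ℕ, ∀ z : ℕ,
      (∃ t t', tR t = tL t' ∧ (σ (x, z) = t ∧ y = x + 1) ∧ σ (y, z) = t') ∧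
      (∃ t t', tT t = tB t' ∧ (σ (z, x) = t ∧ y = x + 1) ∧ σ (z, y) = t')) ∧
    (∀ x z : ℕ, ∀ t, (∃ y, σ (x, z) = t ∧ y = x + 1) → σ (x, z) = t) ∧
    (∀ x z : ℕ, ∀ t, (∃ y, σ (z, x) = t ∧ y = x + 1) → σ (z, x) = t) := by
  refine ⟨fun x y => ⟨_, rfl⟩, fun x y t t' h ⟨h1, h2⟩ => h (h1 ▸ h2 ▸ rfl), ?_,
    fun x z t ⟨y, h, _⟩ => h, fun x z t ⟨y, h, _⟩ => h⟩
  intro x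
  exact ⟨x + 1, fun z => ⟨⟨_, _, hH x z, ⟨rfl, rfl⟩, rfl⟩, ⟨_, _, hV z x, ⟨rfl, rfl⟩, rfl⟩⟩⟩
end
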